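/- If B is a complex LLL-reduced basis with parameter δ and α = 1/(δ-1/2), then ∏_{i=1}^n ‖bᵢ‖ ≤ α^{n(n-1)/4} |det B|. -/

import Mathlib

open Finset
open scoped Matrix

/-- The `i`-th column of a complex matrix, as a vector of `ℂⁿ`. -/
noncomputable def col {n : ℕ} (B : Matrix (Fin n) (Fin n) ℂ) (i : Fin n) :
    EuclideanSpace ℂ (Fin n) :=
  (WithLp.equiv 2 (Fin n → ℂ)).symm (fun x => B x i)

/-- Gram-Schmidt orthogonalization of a family of vectors in ℂⁿ. -/
noncomputable def gso {n : ℕ} (b : Fin n → EuclideanSpace ℂ (Fin n)) :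
    Fin n → EuclideanSpace ℂ (Fin n) :=
  @InnerProductSpace.gramSchmidt ℂ _ _ _ _ (Fin n) _ _ (inferInstance : WellFoundedLT (Fin n)) b

/-- Gram-Schmidt coefficient μ_{i,j} = ⟨bᵢ, b̂ⱼ⟩ / ‖b̂ⱼ‖². -/
noncomputable def mu {n : ℕ} (b : Fin n → EuclideanSpace ℂ (Fin n)) (i j : Fin n) : ℂ :=
  (inner ℂ (gso b j) (b i) : ℂ) / ((‖gso b j‖ ^ 2 : ℝ) : ℂ)

lemma b_eq {n : ℕ} (b : Fin n → EuclideanSpace ℂ (Fin n)) (i : Fin n) :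
    b i = gso b i + ∑ j ∈ Finset.Iio i, mu b i j • gso b j := by
  have h := @InnerProductSpace.gramSchmidt_def'' ℂ _ _ _ _ (Fin n) _ _ (inferInstance : WellFoundedLT (Fin n)) b i
  rw [gso]
  nth_rewrite 1 [h]
  congr 1
  apply Finset.sum_congr rfl
  intro j _
  congr 1
  rw [mu, gso]
  norm_cast

lemma gso_orth {n : ℕ} (b : Fin n → EuclideanSpace ℂ (Fin n)) {a c : Fin n} (h : a ≠ c) :
    (inner ℂ (gso b a) (gso b c) : ℂ) = 0 := by
  exact @InnerProductSpace.gramSchmidt_orthogonal ℂ _ _ _ _ (Fin n) _ _ (inferInstance : WellFoundedLT (Fin n)) b a c h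

lemma normsq_eq {n : ℕ} (b : Fin n → EuclideanSpace ℂ (Fin n)) (i : Fin n) :
    ‖b i‖^2 = ‖gso b i‖^2 + ∑ j ∈ Finset.Iio i, ‖mu b i j‖^2 * ‖gso b j‖^2 := by
  set g := gso b with hg
  set S := ∑ j ∈ Finset.Iio i, mu b i j • g j with hS
  have h1 : (inner ℂ (g i) S : ℂ) = 0 := by
    rw [hS, inner_sum]
    refine Finset.sum_eq_zero fun j hj => ?_
    rw [inner_smul_right, gso_orth b (Finset.mem_Iio.mp hj).ne', mul_zero]
  have h2 : ‖S‖^2 = ∑ j ∈ Finset.Iio i, ‖mu b i j‖^2 * ‖g j‖^2 := by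
    have : (inner ℂ S S : ℂ) = ((∑ j ∈ Finset.Iio i, ‖mu b i j‖^2 * ‖g j‖^2 : ℝ) : ℂ) := by
      push_cast
      rw [hS, sum_inner (𝕜 := ℂ)]
      refine Finset.sum_congr rfl fun j hj => ?_
      rw [inner_smul_left, inner_sum, Finset.sum_eq_single j]
      · rw [inner_smul_right, inner_self_eq_norm_sq_to_K]
        push_cast
        rw [← mul_assoc]
        congr 1
        rw [mul_comm, Complex.mul_conj, Complex.normSq_eq_norm_sq]
        push_cast
        ring
      · intro k hk hkj
        rw [inner_smul_right, gso_orth b hkj.symm, mul_zero]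
      · intro h; exact absurd hj h
    have h3 := @inner_self_eq_norm_sq ℂ _ _ _ _ S
    rw [this] at h3
    simp only [RCLike.re_to_complex, Complex.ofReal_re] at h3
    exact h3.symm
  have h4 : b i = g i + S := b_eq b i
  rw [h4, @norm_add_sq ℂ _ _ _ _ (g i) S, h2, h1]
  simp

lemma det_eq_prod {n : ℕ} (B : Matrix (Fin n) (Fin n) ℂ) :
    ‖B.det‖ = ∏ i, ‖gso (col B) i‖ := by
  classical
  set b := col B with hb
  set g := gso b with hg
  set G : Matrix (Fin n) (Fin n) ℂ := fun x j => g j x with hG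
  set T : Matrix (Fin n) (Fin n) ℂ :=
    fun j i => if j = i then 1 else if j < i then mu b i j else 0 with hT
  have hBT : B = G * T := by
    ext x i
    rw [Matrix.mul_apply]
    have hcol : B x i = b i x := rfl
    have h1 := congrFun (congrArg (fun v : EuclideanSpace ℂ (Fin n) => (v : Fin n → ℂ)) (b_eq b i)) x
    simp only [PiLp.add_apply, PiLp.smul_apply, smul_eq_mul] at h1
    have hsum : ∀ (s : Finset (Fin n)) (f : Fin n → EuclideanSpace ℂ (Fin n)),
        (∑ j ∈ s, f j) x = ∑ j ∈ s, f j x := by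
      intro s f
      induction s using Finset.induction with
      | empty => rfl
      | insert j s hj ih => rw [Finset.sum_insert hj, Finset.sum_insert hj, PiLp.add_apply, ih]
    rw [hsum] at h1
    simp only [PiLp.smul_apply, smul_eq_mul] at h1
    rw [hcol, h1]
    have hzero : ∀ j ∈ (Finset.univ : Finset (Fin n)), j ∉ Finset.Iic i → G x j * T j i = 0 := by
      intro j _ hj
      rw [Finset.mem_Iic, not_le] at hj
      have h2 : ¬ (j = i) := fun h => absurd h.le hj.not_ge
      have h3 : ¬ (j < i) := fun h => absurd h (lt_asymm hj)
      simp [hT, h2, h3]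
    rw [← Finset.sum_subset (Finset.subset_univ (Finset.Iic i)) hzero,
        ← Finset.Iio_insert, Finset.sum_insert (by simp)]
    have hTi : T i i = 1 := by simp [hT]
    have hTji : ∀ j : Fin n, j < i → T j i = mu b i j := by
      intro j hji
      simp [hT, hji.ne, hji]
    rw [show G x i * T i i = g i x by rw [hTi]; ring]
    rw [Finset.sum_congr rfl fun j hj => show G x j * T j i = mu b i j * g j x by
      rw [hTji j (Finset.mem_Iio.mp hj)]; ring]
    try exact h1
  have hdetT : T.det = 1 := by
    have htri : T.BlockTriangular id := by
      intro a c hac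
      have h2 : ¬ (a = c) := fun h => absurd h.le (not_le.mpr hac)
      have h3 : ¬ (a < c) := fun h => absurd h (lt_asymm hac)
      simp [hT, h2, h3]
    rw [Matrix.det_of_upperTriangular htri]
    simp [hT]
  have hGG : Gᴴ * G = Matrix.diagonal (fun i => ((‖g i‖^2 : ℝ) : ℂ)) := by
    ext i j
    rw [Matrix.mul_apply]
    have : ∑ x, Gᴴ i x * G x j = (inner ℂ (g i) (g j) : ℂ) := by
      rw [PiLp.inner_apply]
      refine Finset.sum_congr rfl fun x _ => ?_
      rw [Matrix.conjTranspose_apply]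
      simp [hG, Matrix.conjTranspose_apply, mul_comm]
    rw [this]
    by_cases h : i = j
    · subst h
      rw [inner_self_eq_norm_sq_to_K, Matrix.diagonal_apply_eq]
      norm_cast
    · rw [gso_orth b h, Matrix.diagonal_apply_ne _ h]
  have hdetB : B.det = G.det := by rw [hBT, Matrix.det_mul, hdetT, mul_one]
  have key : (Complex.normSq G.det : ℂ) = ((∏ i, ‖g i‖^2 : ℝ) : ℂ) := by
    rw [Complex.normSq_eq_conj_mul_self, Complex.ofReal_prod]
    calc (starRingEnd ℂ) G.det * G.det = Gᴴ.det * G.det := by rw [Matrix.det_conjTranspose]; rfl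
    _ = (Gᴴ * G).det := (Matrix.det_mul _ _).symm
    _ = ∏ i, ((‖g i‖^2 : ℝ) : ℂ) := by rw [hGG, Matrix.det_diagonal]
  have key2 : ‖B.det‖ ^ 2 = (∏ i, ‖g i‖) ^ 2 := by
    rw [hdetB, Complex.sq_norm, ← Finset.prod_pow]
    exact_mod_cast key
  have h0 : (0:ℝ) ≤ ‖B.det‖ := norm_nonneg _
  have h0' : (0:ℝ) ≤ ∏ i, ‖g i‖ := Finset.prod_nonneg fun i _ => norm_nonneg _
  nlinarith [key2, h0, h0']

/-- B is complex LLL-reduced with parameter δ: size-reduced plus the Lovász condition. -/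
def LLLReduced {n : ℕ} (δ : ℝ) (b : Fin n → EuclideanSpace ℂ (Fin n)) : Prop :=
  (∀ i j : Fin n, j < i → |(mu b i j).re| ≤ 1/2 ∧ |(mu b i j).im| ≤ 1/2) ∧
  (∀ i j : Fin n, j.val + 1 = i.val →
    ‖gso b i‖^2 ≥ (δ - ‖mu b i j‖ ^ 2) * ‖gso b j‖^2)

lemma mu_sq_le {n : ℕ} {δ : ℝ} {b : Fin n → EuclideanSpace ℂ (Fin n)}
    (h : LLLReduced δ b) {i j : Fin n} (hji : j < i) :
    ‖mu b i j‖ ^ 2 ≤ 1/2 := by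
  obtain ⟨hre, him⟩ := h.1 i j hji
  rw [Complex.sq_norm, Complex.normSq_apply]
  nlinarith [abs_nonneg (mu b i j).re, abs_nonneg (mu b i j).im,
    sq_abs (mu b i j).re, sq_abs (mu b i j).im]

lemma chain {n : ℕ} {δ : ℝ} (hδ1 : 1/2 < δ) {b : Fin n → EuclideanSpace ℂ (Fin n)}
    (h : LLLReduced δ b) (k : ℕ) :
    ∀ i j : Fin n, j.val + k = i.val →
      ‖gso b j‖^2 ≤ (1/(δ - 1/2))^k * ‖gso b i‖^2 := by
  induction k with
  | zero =>
    intro i j hij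
    have : j = i := Fin.ext (by omega)
    subst this; simp
  | succ k ih =>
    intro i j hij
    have hlt : j.val + k < n := by omega
    set i' : Fin n := ⟨j.val + k, hlt⟩ with hi'
    have h1 : ‖gso b j‖^2 ≤ (1/(δ - 1/2))^k * ‖gso b i'‖^2 := ih i' j rfl
    have h2 : ‖gso b i‖^2 ≥ (δ - ‖mu b i i'‖ ^ 2) * ‖gso b i'‖^2 :=
      h.2 i i' (by simp [hi']; omega)
    have h3 : ‖mu b i i'‖ ^ 2 ≤ 1/2 :=
      mu_sq_le h (by rw [Fin.lt_def]; simp [hi']; omega)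
    have hd : (0:ℝ) < δ - 1/2 := by linarith
    have h4 : ‖gso b i'‖^2 ≤ (1/(δ - 1/2)) * ‖gso b i‖^2 := by
      rw [div_mul_eq_mul_div, le_div_iff₀ hd]
      nlinarith [sq_nonneg ‖gso b i'‖]
    have h5 : (0:ℝ) ≤ (1/(δ - 1/2))^k := by positivity
    calc ‖gso b j‖^2 ≤ (1/(δ - 1/2))^k * ‖gso b i'‖^2 := h1
    _ ≤ (1/(δ - 1/2))^k * ((1/(δ - 1/2)) * ‖gso b i‖^2) := by
        exact mul_le_mul_of_nonneg_left h4 h5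
    _ = (1/(δ - 1/2))^(k+1) * ‖gso b i‖^2 := by ring

lemma sum_pow_le {α : ℝ} (hα : 2 ≤ α) (m : ℕ) :
    1 + (1/2) * ∑ t ∈ Finset.range m, α^(t+1) ≤ α^m := by
  induction m with
  | zero => simp
  | succ m ih =>
    rw [Finset.sum_range_succ]
    have h1 : (0:ℝ) ≤ α^m := by positivity
    have : α^(m+1) = α^m * α := by ring
    nlinarith [ih]

lemma normsq_bound {n : ℕ} {δ : ℝ} (hδ1 : 1/2 < δ) (hδ2 : δ ≤ 1)
    {b : Fin n → EuclideanSpace ℂ (Fin n)} (h : LLLReduced δ b) (i : Fin n) :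
    ‖b i‖^2 ≤ (1/(δ - 1/2))^(i.val) * ‖gso b i‖^2 := by
  set α := 1/(δ - 1/2) with hαdef
  have hd : (0:ℝ) < δ - 1/2 := by linarith
  have hα : 2 ≤ α := by
    rw [hαdef, le_div_iff₀ hd]; linarith
  have hstep : ∀ j ∈ Finset.Iio i, ‖mu b i j‖^2 * ‖gso b j‖^2 ≤
      (1/2) * (α^(i.val - j.val) * ‖gso b i‖^2) := by
    intro j hj
    have hji := Finset.mem_Iio.mp hj
    have hc := chain hδ1 h (i.val - j.val) i j (by omega)
    have hm := mu_sq_le h hji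
    have h0 : (0:ℝ) ≤ ‖gso b j‖^2 := sq_nonneg _
    have h0' : (0:ℝ) ≤ ‖mu b i j‖^2 := sq_nonneg _
    nlinarith
  have hsum : ∑ j ∈ Finset.Iio i, ‖mu b i j‖^2 * ‖gso b j‖^2 ≤
      (1/2) * (∑ t ∈ Finset.range i.val, α^(t+1)) * ‖gso b i‖^2 := by
    calc ∑ j ∈ Finset.Iio i, ‖mu b i j‖^2 * ‖gso b j‖^2
        ≤ ∑ j ∈ Finset.Iio i, (1/2) * (α^(i.val - j.val) * ‖gso b i‖^2) :=
          Finset.sum_le_sum hstep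
    _ = (1/2) * (∑ t ∈ Finset.range i.val, α^(t+1)) * ‖gso b i‖^2 := by
        rw [mul_comm (1/2 : ℝ), Finset.sum_mul, Finset.sum_mul]
        refine Finset.sum_nbij' (fun j => i.val - j.val - 1) (fun t => ⟨i.val - t - 1, by omega⟩)
          ?_ ?_ ?_ ?_ ?_
        · intro j hj
          have := Finset.mem_Iio.mp hj
          simp only [Finset.mem_range]
          omega
        · intro t ht
          have := Finset.mem_range.mp ht
          rw [Finset.mem_Iio, Fin.lt_def]
          simp
          omega
        · intro j hj
          have := Finset.mem_Iio.mp hj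
          apply Fin.ext
          simp
          omega
        · intro t ht
          have := Finset.mem_range.mp ht
          simp
          omega
        · intro j hj
          have hji := Finset.mem_Iio.mp hj
          have h5 : i.val - j.val - 1 + 1 = i.val - j.val := by omega
          rw [h5]; ring
  have hexp := normsq_eq b i
  have hsp := sum_pow_le hα i.val
  have h0 : (0:ℝ) ≤ ‖gso b i‖^2 := sq_nonneg _
  nlinarith [hexp, hsum, hsp]

theorem stmt4 (n : ℕ) (δ : ℝ) (hδ1 : 1/2 < δ) (hδ2 : δ ≤ 1)
    (B : Matrix (Fin n) (Fin n) ℂ) (hdet : B.det ≠ 0)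
    (hLLL : LLLReduced δ (col B)) :
    ∏ i : Fin n, ‖col B i‖ ≤
      (1 / (δ - 1/2)) ^ (((n * (n - 1) : ℕ) : ℝ) / 4) * ‖B.det‖ := by
  set b := col B with hb
  set g := gso b with hg
  set α := 1/(δ - 1/2) with hαdef
  have hd : (0:ℝ) < δ - 1/2 := by linarith
  have hα2 : 2 ≤ α := by rw [hαdef, le_div_iff₀ hd]; linarith
  have hαpos : (0:ℝ) < α := by linarith
  have hα0 : (0:ℝ) ≤ α := le_of_lt hαpos
  have hper : ∀ i : Fin n, ‖b i‖ ≤ (Real.sqrt α)^(i.val) * ‖g i‖ := by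
    intro i
    have hq : ((Real.sqrt α)^(i.val))^2 = α^(i.val) := by
      rw [← pow_mul, mul_comm, pow_mul, Real.sq_sqrt hα0]
    have h1 := normsq_bound hδ1 hδ2 hLLL i
    have h2 : ‖b i‖^2 ≤ ((Real.sqrt α)^(i.val) * ‖g i‖)^2 := by
      rw [mul_pow, hq]; exact h1
    have h3 : (0:ℝ) ≤ (Real.sqrt α)^(i.val) * ‖g i‖ := by positivity
    nlinarith [norm_nonneg (b i), h2, h3]
  have hprod : ∏ i : Fin n, ‖b i‖ ≤ (∏ i : Fin n, (Real.sqrt α)^(i.val)) * ∏ i : Fin n, ‖g i‖ := by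
    rw [← Finset.prod_mul_distrib]
    exact Finset.prod_le_prod (fun i _ => norm_nonneg _) (fun i _ => hper i)
  have hsum : ∑ i : Fin n, i.val = n * (n-1) / 2 := by
    rw [Fin.sum_univ_eq_sum_range (fun i => i)]
    exact Finset.sum_range_id n
  have hprodpow : ∏ i : Fin n, (Real.sqrt α)^(i.val) = (Real.sqrt α)^(n*(n-1)/2) := by
    rw [Finset.prod_pow_eq_pow_sum, hsum]
  have hM : 2 * (n*(n-1)/2) = n*(n-1) := by
    rcases n with _ | m
    · simp
    · simp only [Nat.add_sub_cancel]
      obtain ⟨r, hr⟩ := Nat.even_mul_succ_self m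
      have : (m+1) * m = m * (m+1) := Nat.mul_comm _ _
      omega
  have hpow : (Real.sqrt α)^(n*(n-1)/2) = α ^ (((n * (n - 1) : ℕ) : ℝ) / 4) := by
    rw [Real.sqrt_eq_rpow, ← Real.rpow_natCast (α ^ ((1:ℝ)/2)) (n*(n-1)/2),
        ← Real.rpow_mul hα0]
    congr 1
    have : ((n*(n-1)/2 : ℕ) : ℝ) * 2 = ((n*(n-1) : ℕ) : ℝ) := by exact_mod_cast by omega
    push_cast at this ⊢
    linarith
  rw [det_eq_prod B]
  calc ∏ i : Fin n, ‖b i‖ ≤ (∏ i : Fin n, (Real.sqrt α)^(i.val)) * ∏ i : Fin n, ‖g i‖ := hprod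
  _ = α ^ (((n * (n - 1) : ℕ) : ℝ) / 4) * ∏ i : Fin n, ‖g i‖ := by rw [hprodpow, hpow]
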